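/- The inequality (∑_{1≤i<j≤n} x_{ij}) + (1 − w)·n² ≥ n/2 is valid for the polytope PM_n; that is, every point (x, w) ∈ PM_n satisfies it. -/
import Mathlib


open scoped Classical

/-- Edges of the complete graph on `n` vertices: pairs `(i, j)` with `i < j`. -/
abbrev Edg (n : ℕ) := {p : Fin n × Fin n // p.1 < p.2}

/-- 0/1 real value of a boolean. -/
def bval (b : Bool) : ℝ := if b then 1 else 0

/-- Graph on `n` vertices with edge incidence vector `x`. -/
def graphOf {n : ℕ} (x : Edg n → Bool) : SimpleGraph (Fin n) :=
  SimpleGraph.fromEdgeSet {s | ∃ e : Edg n, x e = true ∧ s = s(e.1.1, e.1.2)}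

/-- `G(x)` has a perfect matching. -/
def hasPM {n : ℕ} (x : Edg n → Bool) : Prop :=
  ∃ M : (graphOf x).Subgraph, M.IsPerfectMatching

/-- The point `(x, w_x)` of the perfect matching polytope `PM_n`. -/
noncomputable def pmPt {n : ℕ} (x : Edg n → Bool) : (Edg n → ℝ) × ℝ :=
  (fun e => bval (x e), if hasPM x then 1 else 0)

/-- The perfect matching polytope `PM_n`. -/
noncomputable def PMpoly (n : ℕ) : Set ((Edg n → ℝ) × ℝ) :=
  convexHull ℝ (Set.range (pmPt (n := n)))

lemma sum_bval_ge {n : ℕ} (x : Edg n → Bool) (h : hasPM x) :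
    (n : ℝ) / 2 ≤ ∑ e : Edg n, bval (x e) := by
  obtain ⟨M, hM⟩ := h
  have hm : ∀ v : Fin n, ∃! w, M.Adj v w := fun v => hM.1 (hM.2 v)
  choose m hm' _ using hm
  have key : ∀ v : Fin n, ∃ e : Edg n, x e = true ∧ (v = e.1.1 ∨ v = e.1.2) := by
    intro v
    have hadj := M.adj_sub (hm' v)
    rw [graphOf, SimpleGraph.fromEdgeSet_adj] at hadj
    obtain ⟨⟨e, hxe, hs⟩, hne⟩ := hadj
    refine ⟨e, hxe, ?_⟩
    rw [Sym2.eq_iff] at hs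
    tauto
  choose F hF1 hF2 using key
  have hsub : Finset.univ.image F ⊆ Finset.univ.filter (fun e => x e = true) := by
    intro e he
    simp only [Finset.mem_image] at he
    obtain ⟨v, _, rfl⟩ := he
    simp [hF1]
  have hcard : (Finset.univ : Finset (Fin n)).card ≤
      2 * (Finset.univ.image F).card := by
    apply Finset.card_le_mul_card_image
    intro e _
    have : Finset.univ.filter (fun v => F v = e) ⊆ {e.1.1, e.1.2} := by
      intro v hv
      simp only [Finset.mem_filter] at hv
      have := hF2 v
      rw [hv.2] at this
      simp [Finset.mem_insert]
      tauto
    calc (Finset.univ.filter (fun v => F v = e)).card ≤ ({e.1.1, e.1.2} : Finset (Fin n)).card :=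
          Finset.card_le_card this
      _ ≤ 2 := Finset.card_insert_le _ _ |>.trans (by simp)
  have hcard2 : n ≤ 2 * (Finset.univ.filter (fun e => x e = true)).card := by
    calc n = (Finset.univ : Finset (Fin n)).card := by simp
      _ ≤ 2 * (Finset.univ.image F).card := hcard
      _ ≤ 2 * (Finset.univ.filter (fun e => x e = true)).card := by
          exact Nat.mul_le_mul_left 2 (Finset.card_le_card hsub)
  have hsum : ∑ e : Edg n, bval (x e)
      = ((Finset.univ.filter (fun e => x e = true)).card : ℝ) := by
    rw [← Finset.sum_boole]
    simp [bval]
  rw [hsum]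
  have := (Nat.cast_le (α := ℝ)).2 hcard2
  push_cast at this
  linarith

theorem pm_valid_inequality (n : ℕ) (hn : Even n) (hpos : 0 < n) :
    ∀ p ∈ PMpoly n, (∑ e : Edg n, p.1 e) + (1 - p.2) * (n : ℝ) ^ 2 ≥ (n : ℝ) / 2 := by
  have hlin : IsLinearMap ℝ (fun p : (Edg n → ℝ) × ℝ =>
      (∑ e : Edg n, p.1 e) - p.2 * (n : ℝ) ^ 2) := by
    constructor
    · intro p q
      simp [Prod.fst_add, Prod.snd_add, Finset.sum_add_distrib]
      ring
    · intro c p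
      simp only [Prod.smul_snd, Prod.smul_fst, Pi.smul_apply, smul_eq_mul]
      rw [mul_sub, Finset.mul_sum]
      ring
  have hconv : Convex ℝ {p : (Edg n → ℝ) × ℝ |
      (n : ℝ) / 2 - (n : ℝ) ^ 2 ≤ (∑ e : Edg n, p.1 e) - p.2 * (n : ℝ) ^ 2} :=
    convex_halfSpace_ge hlin _
  intro p hp
  have hsub : PMpoly n ⊆ {p : (Edg n → ℝ) × ℝ |
      (n : ℝ) / 2 - (n : ℝ) ^ 2 ≤ (∑ e : Edg n, p.1 e) - p.2 * (n : ℝ) ^ 2} := by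
    apply convexHull_min _ hconv
    rintro q ⟨x, rfl⟩
    simp only [Set.mem_setOf_eq, pmPt]
    by_cases h : hasPM x
    · have := sum_bval_ge x h
      simp [h]
      nlinarith [sq_nonneg (n : ℝ)]
    · have hnn : (0:ℝ) ≤ ∑ e : Edg n, bval (x e) :=
        Finset.sum_nonneg fun e _ => by simp [bval]; positivity
      have h1 : (1:ℝ) ≤ n := by exact_mod_cast hpos
      simp [h]
      nlinarith
  have := hsub hp
  simp only [Set.mem_setOf_eq] at this
  linarith
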